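/- Let f : ℤ → ℕ ∪ {∞} be a function such that f⁻¹(0) is a finite set, and let φ : ℕ → ℝ be any nonnegative function with φ(x) → ∞ as x → ∞. Then there exists an asymptotic basis A of the integers such that r_A(n) = f(n) for all integers n, and such that A(-x, x) > √x / φ(x) for infinitely many positive integers x. -/

import Mathlib

set_option maxHeartbeats 1000000
open Set

/-- The representation function of a set `A` of integers:
`r_A(n) = card {(a,b) : a, b ∈ A, a ≤ b, a + b = n}`, valued in `ℕ∞`. -/
noncomputable def repFn (A : Set ℤ) (n : ℤ) : ℕ∞ :=
  {p : ℤ × ℤ | p.1 ∈ A ∧ p.2 ∈ A ∧ p.1 ≤ p.2 ∧ p.1 + p.2 = n}.encard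

/-- The counting function of a set `A` of integers:
`A(y, x) = card {a ∈ A : y ≤ a ≤ x}`. -/
noncomputable def countFn (A : Set ℤ) (y x : ℝ) : ℕ :=
  {a : ℤ | a ∈ A ∧ y ≤ (a : ℝ) ∧ (a : ℝ) ≤ x}.ncard

def repSet (A : Set ℤ) (n : ℤ) : Set (ℤ × ℤ) :=
  {p : ℤ × ℤ | p.1 ∈ A ∧ p.2 ∈ A ∧ p.1 ≤ p.2 ∧ p.1 + p.2 = n}
lemma repFn_eq (A : Set ℤ) (n : ℤ) : repFn A n = (repSet A n).encard := rfl
lemma repSet_mono {A B : Set ℤ} (h : A ⊆ B) (n : ℤ) : repSet A n ⊆ repSet B n :=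
  fun p hp => ⟨h hp.1, h hp.2.1, hp.2.2⟩
lemma repFn_mono {A B : Set ℤ} (h : A ⊆ B) (n : ℤ) : repFn A n ≤ repFn B n :=
  Set.encard_mono (repSet_mono h n)
lemma repSet_finite (F : Finset ℤ) (n : ℤ) : (repSet (↑F) n).Finite := by
  apply Set.Finite.subset (Set.Finite.prod F.finite_toSet F.finite_toSet)
  intro p hp; exact ⟨hp.1, hp.2.1⟩
lemma repFn_ne_top (F : Finset ℤ) (n : ℤ) : repFn (↑F) n ≠ ⊤ := by
  rw [repFn_eq]; exact (repSet_finite F n).encard_lt_top.ne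
def InvSt (f : ℤ → ℕ∞) (F : Finset ℤ) (B : ℕ) : Prop :=
  (∀ x ∈ F, -(B:ℤ) ≤ x ∧ x ≤ B) ∧ (∀ z : ℤ, f z = 0 → -(B:ℤ) ≤ z ∧ z ≤ B) ∧
    (∀ m : ℤ, repFn (↑F) m ≤ f m)

lemma digit_unique {P r r' s s' : ℕ} (h1 : r < P) (h2 : r' < P)
    (he : r + P * s = r' + P * s') : r = r' ∧ s = s' := by
  rcases Nat.lt_trichotomy s s' with h | h | h
  · exfalso
    have h3 : P * (s + 1) ≤ P * s' := Nat.mul_le_mul_left _ (by omega)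
    have h4 : P * (s + 1) = P * s + P := by ring
    linarith
  · subst h; omega
  · exfalso
    have h3 : P * (s' + 1) ≤ P * s := Nat.mul_le_mul_left _ (by omega)
    have h4 : P * (s' + 1) = P * s' + P := by ring
    linarith

/-- The Erdős–Turán Sidon set element. -/
def etEl (p i : ℕ) : ℕ := 2 * p * i + i ^ 2 % p

lemma etEl_lt {p i : ℕ} (hp : 0 < p) (hi : i < p) : etEl p i < 2 * p ^ 2 := by
  unfold etEl
  have h1 : i ^ 2 % p < p := Nat.mod_lt _ hp
  have h2 : 2 * p * (i + 1) ≤ 2 * p * p := Nat.mul_le_mul_left _ (by omega)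
  have h3 : 2 * p * (i + 1) = 2 * p * i + 2 * p := by ring
  have h4 : 2 * p * p = 2 * p ^ 2 := by ring
  linarith

lemma etEl_strictMono {p i j : ℕ} (hp : 0 < p) (hij : i < j) : etEl p i < etEl p j := by
  unfold etEl
  have h1 : i ^ 2 % p < p := Nat.mod_lt _ hp
  have h2 : 2 * p * (i + 1) ≤ 2 * p * j := Nat.mul_le_mul_left _ (by omega)
  have h3 : 2 * p * (i + 1) = 2 * p * i + 2 * p := by ring
  have h4 : 0 ≤ j ^ 2 % p := Nat.zero_le _
  linarith

lemma etEl_sidon {p : ℕ} (hp : p.Prime) (hp2 : p ≠ 2) {i j k l : ℕ}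
    (hi : i < p) (hj : j < p) (hk : k < p) (hl : l < p) (hij : i ≤ j) (hkl : k ≤ l)
    (he : etEl p i + etEl p j = etEl p k + etEl p l) : i = k ∧ j = l := by
  haveI : Fact p.Prime := ⟨hp⟩
  have hp0 : 0 < p := hp.pos
  have e1 : etEl p i + etEl p j = (i ^ 2 % p + j ^ 2 % p) + (2 * p) * (i + j) := by
    unfold etEl; ring
  have e2 : etEl p k + etEl p l = (k ^ 2 % p + l ^ 2 % p) + (2 * p) * (k + l) := by
    unfold etEl; ring
  have hr1 : i ^ 2 % p + j ^ 2 % p < 2 * p := by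
    have := Nat.mod_lt (i ^ 2) hp0; have := Nat.mod_lt (j ^ 2) hp0; omega
  have hr2 : k ^ 2 % p + l ^ 2 % p < 2 * p := by
    have := Nat.mod_lt (k ^ 2) hp0; have := Nat.mod_lt (l ^ 2) hp0; omega
  obtain ⟨hq, hs⟩ := digit_unique hr1 hr2 (by rw [← e1, ← e2, he])
  have hs' : (i : ZMod p) + j = k + l := by exact_mod_cast congrArg (Nat.cast : ℕ → ZMod p) hs
  have hq' : (i : ZMod p) ^ 2 + j ^ 2 = k ^ 2 + l ^ 2 := by
    have := congrArg (Nat.cast : ℕ → ZMod p) hq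
    push_cast [ZMod.natCast_mod] at this
    exact this
  have h2 : (2 : ZMod p) ≠ 0 := by
    intro hcon
    have hc : ((2 : ℕ) : ZMod p) = 0 := by exact_mod_cast hcon
    have hdvd := (ZMod.natCast_eq_zero_iff 2 p).mp hc
    exact hp2 ((Nat.prime_dvd_prime_iff_eq hp Nat.prime_two).mp hdvd)
  have h2ij : (2 : ZMod p) * ((i : ZMod p) * j) = 2 * ((k : ZMod p) * l) := by
    linear_combination ((i : ZMod p) + j + k + l) * hs' - hq'
  have hprod : (i : ZMod p) * j = (k : ZMod p) * l := mul_left_cancel₀ h2 h2ij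
  have hroot : ((k : ZMod p) - i) * ((k : ZMod p) - j) = 0 := by
    linear_combination (-(k : ZMod p)) * hs' + hprod
  have lift : ∀ a b : ℕ, a < p → b < p → (a : ZMod p) = (b : ZMod p) → a = b := by
    intro a b hap hbp hab
    have := congrArg ZMod.val hab
    rwa [ZMod.val_cast_of_lt hap, ZMod.val_cast_of_lt hbp] at this
  rcases mul_eq_zero.mp hroot with h | h
  · have hki : k = i := lift k i hk hi (by linear_combination h)
    omega
  · have hkj : k = j := lift k j hk hj (by linear_combination h)
    have hlified : (l : ZMod p) = i := by linear_combination -hs' - h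
    have hli : l = i := lift l i hl hi hlified
    omega

lemma mem_repSet_insert2 {a b : ℤ} {F : Finset ℤ} {m : ℤ} {p : ℤ × ℤ} :
    p ∈ repSet (↑(insert a (insert b F))) m ↔
      ((p.1 = a ∨ p.1 = b ∨ p.1 ∈ F) ∧ (p.2 = a ∨ p.2 = b ∨ p.2 ∈ F) ∧
        p.1 ≤ p.2 ∧ p.1 + p.2 = m) := by
  simp [repSet]

lemma target_step (f : ℤ → ℕ∞) (F : Finset ℤ) (B : ℕ) (n : ℤ) (h : InvSt f F B) :
    ∃ (F' : Finset ℤ) (B' : ℕ), F ⊆ F' ∧ B ≤ B' ∧ InvSt f F' B' ∧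
      (repFn (↑F) n < f n → repFn (↑F) n + 1 ≤ repFn (↑F') n) := by
  obtain ⟨hFB, hZ, hle⟩ := h
  by_cases hr : repFn (↑F) n < f n
  swap
  · exact ⟨F, B, Finset.Subset.refl _, le_refl _, ⟨hFB, hZ, hle⟩, fun hh => absurd hh hr⟩
  obtain ⟨T, hT⟩ : ∃ T : ℤ, T = 5 * B + 5 * n.natAbs + 5 := ⟨_, rfl⟩
  obtain ⟨a, ha⟩ : ∃ a : ℤ, a = -T := ⟨_, rfl⟩
  obtain ⟨b, hb⟩ : ∃ b : ℤ, b = n + T := ⟨_, rfl⟩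
  obtain ⟨F', hF'⟩ : ∃ F' : Finset ℤ, F' = insert a (insert b F) := ⟨_, rfl⟩
  -- the key uniqueness fact
  have key : ∀ m : ℤ, m ≠ n → ∀ p q : ℤ × ℤ, p ∈ repSet (↑F') m → p ∉ repSet (↑F) m →
      q ∈ repSet (↑F') m → (f m ≠ 0 ∧ q = p) := by
    rintro m hmn ⟨u, v⟩ ⟨u', v'⟩ hp hpold hq
    rw [hF', mem_repSet_insert2] at hp hq
    obtain ⟨h1, h2, hle1, hsum⟩ := hp
    obtain ⟨h1', h2', hle1', hsum'⟩ := hq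
    have hnotF : ¬(u ∈ F ∧ v ∈ F) := fun hh => hpold ⟨hh.1, hh.2, hle1, hsum⟩
    have H1 : u = a ∨ u = b ∨ (-(B:ℤ) ≤ u ∧ u ≤ B) := by
      rcases h1 with h | h | h
      exacts [Or.inl h, Or.inr (Or.inl h), Or.inr (Or.inr (hFB _ h))]
    have H2 : v = a ∨ v = b ∨ (-(B:ℤ) ≤ v ∧ v ≤ B) := by
      rcases h2 with h | h | h
      exacts [Or.inl h, Or.inr (Or.inl h), Or.inr (Or.inr (hFB _ h))]
    have H1' : u' = a ∨ u' = b ∨ (-(B:ℤ) ≤ u' ∧ u' ≤ B) := by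
      rcases h1' with h | h | h
      exacts [Or.inl h, Or.inr (Or.inl h), Or.inr (Or.inr (hFB _ h))]
    have H2' : v' = a ∨ v' = b ∨ (-(B:ℤ) ≤ v' ∧ v' ≤ B) := by
      rcases h2' with h | h | h
      exacts [Or.inl h, Or.inr (Or.inl h), Or.inr (Or.inr (hFB _ h))]
    have Hnum : ¬(-(B:ℤ) ≤ u ∧ u ≤ B ∧ -(B:ℤ) ≤ v ∧ v ≤ B) := by
      rintro ⟨c1, c2, c3, c4⟩
      apply hnotF
      clear hpold hnotF hr hle hZ hFB H1 H2 H1' H2'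
      constructor
      · rcases h1 with h | h | h
        · exfalso; omega
        · exfalso; omega
        · exact h
      · rcases h2 with h | h | h
        · exfalso; omega
        · exfalso; omega
        · exact h
    clear hpold hnotF hr hle hFB h1 h2 h1' h2'
    constructor
    · intro h0
      obtain ⟨hz1, hz2⟩ := hZ m h0
      clear hZ
      omega
    · have : u' = u ∧ v' = v := by clear hZ; omega
      exact Prod.ext this.1 this.2
  -- the new pair
  have habmem : ((a, b) : ℤ × ℤ) ∈ repSet (↑F') n := by
    rw [hF', mem_repSet_insert2]
    refine ⟨Or.inl rfl, Or.inr (Or.inl rfl), by omega, by omega⟩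
  have habold : ((a, b) : ℤ × ℤ) ∉ repSet (↑F) n := by
    intro hh
    have := hFB _ hh.1
    omega
  -- new repSet at n
  have hrepn : repSet (↑F') n = insert ((a, b) : ℤ × ℤ) (repSet (↑F) n) := by
    rw [hF']
    ext ⟨u, v⟩
    simp only [mem_repSet_insert2, Set.mem_insert_iff, Prod.mk.injEq]
    constructor
    · rintro ⟨h1, h2, hle1, hsum⟩
      rcases h1 with h1 | h1 | h1 <;> rcases h2 with h2 | h2 | h2
      · exfalso; omega
      · exact Or.inl ⟨h1, h2⟩
      · exfalso; have := hFB _ h2; omega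
      · exfalso; omega
      · exfalso; omega
      · exfalso; have := hFB _ h2; omega
      · exfalso; have := hFB _ h1; omega
      · exfalso; have := hFB _ h1; omega
      · exact Or.inr ⟨h1, h2, hle1, hsum⟩
    · rintro (⟨hu, hv⟩ | hold)
      · exact ⟨Or.inl hu, Or.inr (Or.inl hv), by omega, by omega⟩
      · exact ⟨Or.inr (Or.inr hold.1), Or.inr (Or.inr hold.2.1), hold.2.2⟩
  have hstep : repFn (↑F') n = repFn (↑F) n + 1 := by
    rw [repFn_eq, repFn_eq, hrepn, Set.encard_insert_of_notMem habold]
  refine ⟨F', B + (5 * B + 6 * n.natAbs + 5), ?_, by omega, ⟨?_, ?_, ?_⟩, ?_⟩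
  · intro x hx; simp [hF', Finset.mem_insert.mpr, hx]
  · -- element bounds
    intro x hx
    simp only [hF', Finset.mem_insert] at hx
    rcases hx with rfl | rfl | hx
    · omega
    · omega
    · have := hFB _ hx; omega
  · intro z hz; have := hZ z hz; omega
  · -- reps bounded by f
    intro m
    by_cases hmn : m = n
    · subst hmn
      rw [hstep]
      exact Order.add_one_le_of_lt hr
    · by_cases hsub : repSet (↑F') m ⊆ repSet (↑F) m
      · exact le_trans (Set.encard_mono hsub) (hle m)
      · obtain ⟨p, hp, hpold⟩ := Set.not_subset.mp hsub
        obtain ⟨hf0, -⟩ := key m hmn p p hp hpold hp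
        have hsing : repSet (↑F') m ⊆ {p} := by
          intro q hq
          exact (key m hmn p q hp hpold hq).2
        calc repFn (↑F') m ≤ ({p} : Set (ℤ × ℤ)).encard := Set.encard_mono hsing
          _ = 1 := Set.encard_singleton p
          _ ≤ f m := ENat.one_le_iff_ne_zero.mpr hf0
  · intro _
    rw [hstep]

lemma mem_repSet_union {F G : Finset ℤ} {m : ℤ} {p : ℤ × ℤ} :
    p ∈ repSet (↑(F ∪ G)) m ↔
      ((p.1 ∈ F ∨ p.1 ∈ G) ∧ (p.2 ∈ F ∨ p.2 ∈ G) ∧ p.1 ≤ p.2 ∧ p.1 + p.2 = m) := by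
  simp [repSet, Finset.mem_union]

lemma block_step (f : ℤ → ℕ∞) (φ : ℕ → ℝ)
    (hφ : Filter.Tendsto φ Filter.atTop Filter.atTop)
    (F : Finset ℤ) (B : ℕ) (h : InvSt f F B) :
    ∃ (F' : Finset ℤ) (B' : ℕ), F ⊆ F' ∧ B < B' ∧ InvSt f F' B' ∧
      ∃ x : ℕ, B < x ∧ ∃ G : Finset ℤ, G ⊆ F' ∧ (∀ g ∈ G, 0 ≤ g ∧ g ≤ (x : ℤ)) ∧
        Real.sqrt x / φ x < (G.card : ℝ) := by
  classical
  obtain ⟨hFB, hZ, hle⟩ := h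
  -- choose the parameters
  obtain ⟨c, hc⟩ : ∃ c : ℕ, c = 2 * B + 1 := ⟨_, rfl⟩
  obtain ⟨K, hK⟩ : ∃ K : ℕ, K = 12 * B + 5 := ⟨_, rfl⟩
  -- threshold from tendsto
  obtain ⟨X₀, hX₀⟩ : ∃ X₀ : ℕ, ∀ y : ℕ, X₀ ≤ y → Real.sqrt K + 1 ≤ φ y :=
    Filter.eventually_atTop.mp (hφ.eventually_ge_atTop (Real.sqrt K + 1))
  obtain ⟨p, hpX, hp⟩ := Nat.exists_infinite_primes (max X₀ 3)
  have hp3 : 3 ≤ p := le_trans (le_max_right _ _) hpX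
  have hpX₀ : X₀ ≤ p := le_trans (le_max_left _ _) hpX
  have hp2 : p ≠ 2 := by omega
  have hp0 : 0 < p := by omega
  obtain ⟨S, hS⟩ : ∃ S : ℕ, S = c * (2 * p ^ 2) := ⟨_, rfl⟩
  obtain ⟨N, hN⟩ : ∃ N : ℕ, N = S + 4 * B + 1 := ⟨_, rfl⟩
  obtain ⟨x, hx⟩ : ∃ x : ℕ, x = N + S := ⟨_, rfl⟩
  obtain ⟨G, hG⟩ : ∃ G : Finset ℤ,
      G = (Finset.range p).image (fun i => (N : ℤ) + (c : ℤ) * etEl p i) := ⟨_, rfl⟩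
  -- basic numeric facts
  have hc0 : 0 < c := by omega
  have hSc : (c : ℤ) * (2 * (p:ℤ) ^ 2) = (S : ℤ) := by push_cast [hS]; ring
  have hp2' : (1 : ℤ) ≤ (p : ℤ) ^ 2 := by
    have := Nat.pow_le_pow_left (show 1 ≤ p by omega) 2
    exact_mod_cast this
  have hcS : (c : ℤ) ≤ (S : ℤ)  := by nlinarith [hSc]
  have hS0 : (0 : ℤ) ≤ S := by positivity
  -- membership descriptions for G
  have hGmem : ∀ g : ℤ, g ∈ G → ∃ i : ℕ, i < p ∧ g = (N : ℤ) + (c : ℤ) * etEl p i := by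
    intro g hg
    rw [hG] at hg
    simp only [Finset.mem_image, Finset.mem_range] at hg
    obtain ⟨i, hi, hgi⟩ := hg
    exact ⟨i, hi, hgi.symm⟩
  have hEbound : ∀ i : ℕ, i < p → (0 : ℤ) ≤ (c : ℤ) * etEl p i ∧ (c : ℤ) * etEl p i ≤ (S : ℤ) - c := by
    intro i hi
    constructor
    · exact mul_nonneg (Int.natCast_nonneg _) (Int.natCast_nonneg _)
    · have h1 : etEl p i < 2 * p ^ 2 := etEl_lt hp0 hi
      have h2 : (etEl p i : ℤ) + 1 ≤ 2 * (p:ℤ) ^ 2 := by exact_mod_cast h1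
      nlinarith [hSc, Int.natCast_nonneg c]
  -- the key uniqueness fact
  have key : ∀ m : ℤ, ∀ pr q : ℤ × ℤ, pr ∈ repSet (↑(F ∪ G)) m → pr ∉ repSet (↑F) m →
      q ∈ repSet (↑(F ∪ G)) m → (f m ≠ 0 ∧ q = pr) := by
    rintro m ⟨u, v⟩ ⟨u', v'⟩ hpr hprold hq
    rw [mem_repSet_union] at hpr hq
    obtain ⟨h1, h2, hle1, hsum⟩ := hpr
    obtain ⟨h1', h2', hle1', hsum'⟩ := hq
    dsimp only at h1 h2 hle1 hsum h1' h2' hle1' hsum'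
    have hnotF : ¬(u ∈ F ∧ v ∈ F) := fun hh => hprold ⟨hh.1, hh.2, hle1, hsum⟩
    -- normalize p's coordinates: u ∈ F, v ∈ G  or  u, v ∈ G
    have hcase : (u ∈ F ∧ v ∈ G) ∨ (u ∈ G ∧ v ∈ G) := by
      rcases h1 with h1 | h1 <;> rcases h2 with h2 | h2
      · exact absurd ⟨h1, h2⟩ hnotF
      · exact Or.inl ⟨h1, h2⟩
      · -- u ∈ G, v ∈ F : impossible since u ≤ v
        exfalso
        obtain ⟨i, hi, hu⟩ := hGmem u h1
        obtain ⟨hE0, hE1⟩ := hEbound i hi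
        obtain ⟨hv1, hv2⟩ := hFB v h2
        have : (N : ℤ) = S + 4 * B + 1 := by exact_mod_cast congrArg (Nat.cast : ℕ → ℤ) hN
        linarith [hu ▸ hle1]
      · exact Or.inr ⟨h1, h2⟩
    have hNZ : (N : ℤ) = (S : ℤ) + 4 * B + 1 := by exact_mod_cast congrArg (Nat.cast : ℕ → ℤ) hN
    -- m is large
    have hmbig : (B : ℤ) < m := by
      rcases hcase with ⟨h1f, h2g⟩ | ⟨h1g, h2g⟩
      · obtain ⟨i, hi, hv⟩ := hGmem v h2g
        obtain ⟨hE0, hE1⟩ := hEbound i hi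
        obtain ⟨hu1, hu2⟩ := hFB u h1f
        linarith [hsum, hv]
      · obtain ⟨i, hi, hu⟩ := hGmem u h1g
        obtain ⟨j, hj, hv⟩ := hGmem v h2g
        obtain ⟨hE0, hE1⟩ := hEbound i hi
        obtain ⟨hE0', hE1'⟩ := hEbound j hj
        linarith [hsum]
    constructor
    · intro h0
      obtain ⟨hz1, hz2⟩ := hZ m h0
      linarith
    -- uniqueness
    · -- q cannot be an F-F pair
      have hq' : (u' ∈ F ∧ v' ∈ G) ∨ (u' ∈ G ∧ v' ∈ G) := by
        rcases h1' with h1' | h1' <;> rcases h2' with h2' | h2'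
        · exfalso
          obtain ⟨ha1, ha2⟩ := hFB u' h1'
          obtain ⟨hb1, hb2⟩ := hFB v' h2'
          rcases hcase with ⟨h1f, h2g⟩ | ⟨h1g, h2g⟩
          · obtain ⟨i, hi, hv⟩ := hGmem v h2g
            obtain ⟨hE0, hE1⟩ := hEbound i hi
            obtain ⟨hu1, hu2⟩ := hFB u h1f
            linarith [hsum, hsum', hv]
          · obtain ⟨i, hi, hu⟩ := hGmem u h1g
            obtain ⟨j, hj, hv⟩ := hGmem v h2g
            obtain ⟨hE0, hE1⟩ := hEbound i hi
            obtain ⟨hE0', hE1'⟩ := hEbound j hj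
            linarith [hsum, hsum']
        · exact Or.inl ⟨h1', h2'⟩
        · exfalso
          obtain ⟨i, hi, hu'⟩ := hGmem u' h1'
          obtain ⟨hE0, hE1⟩ := hEbound i hi
          obtain ⟨hb1, hb2⟩ := hFB v' h2'
          linarith [hle1', hu']
        · exact Or.inr ⟨h1', h2'⟩
      rcases hcase with ⟨h1f, h2g⟩ | ⟨h1g, h2g⟩ <;> rcases hq' with ⟨h1f', h2g'⟩ | ⟨h1g', h2g'⟩
      · -- (F,G) and (F,G)
        obtain ⟨i, hi, hv⟩ := hGmem v h2g
        obtain ⟨j, hj, hv'⟩ := hGmem v' h2g'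
        obtain ⟨hE0, hE1⟩ := hEbound i hi
        obtain ⟨hE0', hE1'⟩ := hEbound j hj
        obtain ⟨hu1, hu2⟩ := hFB u h1f
        obtain ⟨hu1', hu2'⟩ := hFB u' h1f'
        have heq : etEl p i = etEl p j := by
          by_contra hne
          rcases Nat.lt_or_ge (etEl p i) (etEl p j) with hlt | hge
          · have h3 : (c : ℤ) * (etEl p i + 1) ≤ (c : ℤ) * etEl p j := by
              have : (etEl p i : ℤ) + 1 ≤ (etEl p j : ℤ) := by exact_mod_cast hlt
              have hc0' : (0 : ℤ) ≤ c := by positivity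
              nlinarith
            have hcz : (c : ℤ) = 2 * B + 1 := by exact_mod_cast congrArg (Nat.cast : ℕ → ℤ) hc
            nlinarith [hsum, hsum', hv, hv']
          · have hlt' : etEl p j < etEl p i := by omega
            have h3 : (c : ℤ) * (etEl p j + 1) ≤ (c : ℤ) * etEl p i := by
              have : (etEl p j : ℤ) + 1 ≤ (etEl p i : ℤ) := by exact_mod_cast hlt'
              have hc0' : (0 : ℤ) ≤ c := by positivity
              nlinarith
            have hcz : (c : ℤ) = 2 * B + 1 := by exact_mod_cast congrArg (Nat.cast : ℕ → ℤ) hc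
            nlinarith [hsum, hsum', hv, hv']
        have hvv : v' = v := by rw [hv, hv', heq]
        have huu : u' = u := by
          have : u + v = u' + v' := by rw [hsum, hsum']
          rw [hvv] at this; linarith
        exact Prod.ext huu hvv
      · -- (F,G) and (G,G) : impossible
        exfalso
        obtain ⟨i, hi, hv⟩ := hGmem v h2g
        obtain ⟨j, hj, hu'⟩ := hGmem u' h1g'
        obtain ⟨k, hk, hv'⟩ := hGmem v' h2g'
        obtain ⟨hE0, hE1⟩ := hEbound i hi
        obtain ⟨hE0', hE1'⟩ := hEbound j hj
        obtain ⟨hE0'', hE1''⟩ := hEbound k hk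
        obtain ⟨hu1, hu2⟩ := hFB u h1f
        linarith [hsum, hsum', hv, hu', hv']
      · -- (G,G) and (F,G) : impossible
        exfalso
        obtain ⟨i, hi, hu⟩ := hGmem u h1g
        obtain ⟨j, hj, hv⟩ := hGmem v h2g
        obtain ⟨k, hk, hv'⟩ := hGmem v' h2g'
        obtain ⟨hE0, hE1⟩ := hEbound i hi
        obtain ⟨hE0', hE1'⟩ := hEbound j hj
        obtain ⟨hE0'', hE1''⟩ := hEbound k hk
        obtain ⟨hu1', hu2'⟩ := hFB u' h1f'
        linarith [hsum, hsum', hu, hv, hv']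
      · -- (G,G) and (G,G) : Sidon
        obtain ⟨i, hi, hu⟩ := hGmem u h1g
        obtain ⟨j, hj, hv⟩ := hGmem v h2g
        obtain ⟨k, hk, hu'⟩ := hGmem u' h1g'
        obtain ⟨l, hl, hv'⟩ := hGmem v' h2g'
        have hc0' : (0 : ℤ) < (c : ℤ) := by exact_mod_cast hc0
        have hsums : (c : ℤ) * ((etEl p i : ℤ) + etEl p j) = (c : ℤ) * ((etEl p k : ℤ) + etEl p l) := by
          have : u + v = u' + v' := by rw [hsum, hsum']
          rw [hu, hv, hu', hv'] at this
          ring_nf at this ⊢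
          linarith
        have hsums' : etEl p i + etEl p j = etEl p k + etEl p l := by
          have := mul_left_cancel₀ (ne_of_gt hc0') hsums
          exact_mod_cast this
        have hije : etEl p i ≤ etEl p j := by
          have : (c : ℤ) * etEl p i ≤ (c : ℤ) * etEl p j := by
            rw [hu, hv] at hle1; linarith
          have := le_of_mul_le_mul_left this hc0'
          exact_mod_cast this
        have hkle : etEl p k ≤ etEl p l := by
          have : (c : ℤ) * etEl p k ≤ (c : ℤ) * etEl p l := by
            rw [hu', hv'] at hle1'; linarith
          have := le_of_mul_le_mul_left this hc0'
          exact_mod_cast this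
        have hij : i ≤ j := by
          by_contra hcon
          have := etEl_strictMono hp0 (by omega : j < i)
          omega
        have hkl : k ≤ l := by
          by_contra hcon
          have := etEl_strictMono hp0 (by omega : l < k)
          omega
        obtain ⟨hik, hjl⟩ := etEl_sidon hp hp2 hi hj hk hl hij hkl hsums'
        have huu : u' = u := by rw [hu, hu', hik]
        have hvv : v' = v := by rw [hv, hv', hjl]
        exact Prod.ext huu hvv
  
  -- assemble
  have hNZ : (N : ℤ) = (S : ℤ) + 4 * B + 1 := by exact_mod_cast congrArg (Nat.cast : ℕ → ℤ) hN
  have hxZ : (x : ℤ) = (N : ℤ) + S := by exact_mod_cast congrArg (Nat.cast : ℕ → ℤ) hx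
  have hBx : B < x := by omega
  have hcard : G.card = p := by
    rw [hG, Finset.card_image_of_injOn, Finset.card_range]
    intro i hi j hj hij
    simp only [Finset.mem_coe, Finset.mem_range] at hi hj
    by_contra hne
    have hcc : (0 : ℤ) < (c : ℤ) := by exact_mod_cast hc0
    rcases Nat.lt_or_ge i j with hlt | hge
    · have h1 : etEl p i < etEl p j := etEl_strictMono hp0 hlt
      have h2 : ((etEl p i : ℤ)) < etEl p j := by exact_mod_cast h1
      have h3 : (c : ℤ) * etEl p i < (c : ℤ) * etEl p j := by nlinarith
      simp only at hij
      linarith [hij]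
    · have hlt : j < i := by omega
      have h1 : etEl p j < etEl p i := etEl_strictMono hp0 hlt
      have h2 : ((etEl p j : ℤ)) < etEl p i := by exact_mod_cast h1
      have h3 : (c : ℤ) * etEl p j < (c : ℤ) * etEl p i := by nlinarith
      simp only at hij
      linarith [hij]
  refine ⟨F ∪ G, x, Finset.subset_union_left, hBx, ⟨?_, ?_, ?_⟩, x, hBx, G,
    Finset.subset_union_right, ?_, ?_⟩
  · -- element bounds
    intro y hy
    rcases Finset.mem_union.mp hy with hyF | hyG
    · obtain ⟨hy1, hy2⟩ := hFB y hyF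
      have hBN : (B : ℤ) ≤ N := by linarith
      constructor <;> linarith
    · obtain ⟨i, hi, hgi⟩ := hGmem y hyG
      obtain ⟨hE0, hE1⟩ := hEbound i hi
      constructor <;> [linarith; linarith]
  · -- zero set bounds
    intro z hz
    obtain ⟨hz1, hz2⟩ := hZ z hz
    have hBN : (B : ℤ) ≤ N := by linarith
    constructor <;> linarith
  · -- reps bounded by f
    intro m
    by_cases hsub : repSet (↑(F ∪ G)) m ⊆ repSet (↑F) m
    · exact le_trans (Set.encard_mono hsub) (hle m)
    · obtain ⟨pr, hpr, hprold⟩ := Set.not_subset.mp hsub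
      obtain ⟨hf0, -⟩ := key m pr pr hpr hprold hpr
      have hsing : repSet (↑(F ∪ G)) m ⊆ {pr} := fun q hq => (key m pr q hpr hprold hq).2
      calc repFn (↑(F ∪ G)) m ≤ ({pr} : Set (ℤ × ℤ)).encard := Set.encard_mono hsing
        _ = 1 := Set.encard_singleton pr
        _ ≤ f m := ENat.one_le_iff_ne_zero.mpr hf0
  · -- bounds of G elements
    intro g hg
    obtain ⟨i, hi, hgi⟩ := hGmem g hg
    obtain ⟨hE0, hE1⟩ := hEbound i hi
    constructor <;> [linarith; linarith]
  · -- density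
    clear key hGmem hEbound hle hZ hFB hφ
    have hpx : p ≤ x := by
      have h1 : p ≤ p ^ 2 := Nat.le_self_pow (by norm_num) p
      have h2 : p ^ 2 ≤ S := by
        rw [hS]
        calc p ^ 2 ≤ 2 * p ^ 2 := by nlinarith
        _ ≤ c * (2 * p ^ 2) := Nat.le_mul_of_pos_left _ hc0
      omega
    have hφx : Real.sqrt K + 1 ≤ φ x := hX₀ x (le_trans hpX₀ hpx)
    have hsqK : (0 : ℝ) ≤ Real.sqrt K := Real.sqrt_nonneg _
    have hφpos : (0 : ℝ) < φ x := by linarith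
    have hxK : (x : ℝ) ≤ (K : ℝ) * (p : ℝ) ^ 2 := by
      have hxn : x ≤ K * p ^ 2 := by
        have h1 : 1 ≤ p ^ 2 := Nat.one_le_pow _ _ hp0
        have hS2 : S = (4 * B + 2) * p ^ 2 := by rw [hS, hc]; ring
        have h2 : (4 * B + 1) * 1 ≤ (4 * B + 1) * p ^ 2 := Nat.mul_le_mul_left _ h1
        rw [hx, hN, hS2, hK]
        linarith [h2]
      exact_mod_cast hxn
    have hsq : Real.sqrt x ≤ Real.sqrt K * p := by
      have h1 : Real.sqrt x ≤ Real.sqrt ((K : ℝ) * (p : ℝ) ^ 2) := Real.sqrt_le_sqrt hxK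
      rw [Real.sqrt_mul (by positivity) ((p : ℝ) ^ 2), Real.sqrt_sq (by positivity)] at h1
      exact h1
    rw [hcard, div_lt_iff₀ hφpos]
    have hppos : (0 : ℝ) < p := by exact_mod_cast hp0
    have h2 : (p : ℝ) * (Real.sqrt K + 1) ≤ p * φ x :=
      mul_le_mul_of_nonneg_left hφx (le_of_lt hppos)
    calc Real.sqrt x ≤ Real.sqrt K * p := hsq
      _ < (p : ℝ) * (Real.sqrt K + 1) := by linarith [hppos]
      _ ≤ (p : ℝ) * φ x := h2

noncomputable def tEnum : ℕ → ℤ := fun k => (Denumerable.ofNat (ℤ × ℕ) k).1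

def StepP (f : ℤ → ℕ∞) (φ : ℕ → ℝ) (n : ℤ) (σ σ' : Finset ℤ × ℕ) : Prop :=
  σ.1 ⊆ σ'.1 ∧ σ.2 < σ'.2 ∧ InvSt f σ'.1 σ'.2 ∧
    (repFn (↑σ.1) n < f n → repFn (↑σ.1) n + 1 ≤ repFn (↑σ'.1) n) ∧
    ∃ x : ℕ, σ.2 < x ∧ ∃ G : Finset ℤ, G ⊆ σ'.1 ∧ (∀ g ∈ G, 0 ≤ g ∧ g ≤ (x : ℤ)) ∧
      Real.sqrt x / φ x < (G.card : ℝ)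

lemma full_step (f : ℤ → ℕ∞) (φ : ℕ → ℝ)
    (hφ : Filter.Tendsto φ Filter.atTop Filter.atTop) (n : ℤ) (σ : Finset ℤ × ℕ)
    (h : InvSt f σ.1 σ.2) : ∃ σ', StepP f φ n σ σ' := by
  obtain ⟨F₁, B₁, hsub₁, hB₁, hInv₁, hrep₁⟩ := target_step f σ.1 σ.2 n h
  obtain ⟨F₂, B₂, hsub₂, hB₂, hInv₂, x, hx, G, hG, hGb, hGc⟩ := block_step f φ hφ F₁ B₁ hInv₁
  refine ⟨(F₂, B₂), hsub₁.trans hsub₂, by dsimp only; omega, hInv₂, ?_, x, by omega, G, hG, hGb, hGc⟩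
  intro h'
  exact le_trans (hrep₁ h') (repFn_mono (Finset.coe_subset.mpr hsub₂) n)

lemma tEnum_hits (n : ℤ) (k₀ : ℕ) : ∃ k, k₀ ≤ k ∧ tEnum k = n := by
  have hinj : Function.Injective (fun j : ℕ => Encodable.encode ((n, j) : ℤ × ℕ)) := by
    intro j j' h
    have := Encodable.encode_injective (α := ℤ × ℕ) h
    exact (Prod.ext_iff.mp this).2
  have hinf : {k : ℕ | tEnum k = n}.Infinite := by
    apply Set.Infinite.mono (s := Set.range (fun j : ℕ => Encodable.encode ((n, j) : ℤ × ℕ)))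
    · rintro k ⟨j, rfl⟩
      show tEnum _ = n
      unfold tEnum
      rw [Denumerable.ofNat_encode]
    · exact Set.infinite_range_of_injective hinj
  obtain ⟨k, hk, hkgt⟩ := hinf.exists_gt k₀
  exact ⟨k, le_of_lt hkgt, hk⟩

theorem stmt_0 (f : ℤ → ℕ∞) (hf : {n : ℤ | f n = 0}.Finite)
    (φ : ℕ → ℝ) (hφ0 : ∀ x, 0 ≤ φ x)
    (hφ : Filter.Tendsto φ Filter.atTop Filter.atTop) :
    ∃ A : Set ℤ,
      {n : ℤ | ¬ 1 ≤ repFn A n}.Finite ∧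
      (∀ n : ℤ, repFn A n = f n) ∧
      {x : ℕ | 0 < x ∧
        Real.sqrt x / φ x < (countFn A (-(x : ℝ)) (x : ℝ) : ℝ)}.Infinite := by
  classical
  -- bound on the zero set of f
  obtain ⟨B₀, hB₀⟩ : ∃ B₀ : ℕ, ∀ z : ℤ, f z = 0 → -(B₀:ℤ) ≤ z ∧ z ≤ B₀ := by
    refine ⟨hf.toFinset.sup (fun z => z.natAbs), fun z hz => ?_⟩
    have hzmem : z ∈ hf.toFinset := hf.mem_toFinset.mpr hz
    have h2 : z.natAbs ≤ hf.toFinset.sup (fun z => z.natAbs) :=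
      Finset.le_sup (f := fun z : ℤ => z.natAbs) hzmem
    omega
  -- the step function
  have hstep : ∀ (σ : Finset ℤ × ℕ) (k : ℕ), ∃ σ', InvSt f σ.1 σ.2 → StepP f φ (tEnum k) σ σ' := by
    intro σ k
    by_cases h : InvSt f σ.1 σ.2
    · obtain ⟨σ', hσ'⟩ := full_step f φ hφ (tEnum k) σ h
      exact ⟨σ', fun _ => hσ'⟩
    · exact ⟨σ, fun h' => absurd h' h⟩
  choose next hnext using hstep
  obtain ⟨st, hst0, hstS⟩ : ∃ st : ℕ → Finset ℤ × ℕ, st 0 = (∅, B₀) ∧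
      ∀ k, st (k + 1) = next (st k) k :=
    ⟨fun k => Nat.rec ((∅ : Finset ℤ), B₀) (fun k ih => next ih k) k, rfl, fun k => rfl⟩
  -- invariant holds along the sequence
  have hInv : ∀ k, InvSt f (st k).1 (st k).2 := by
    intro k
    induction k with
    | zero =>
      rw [hst0]
      refine ⟨by simp, hB₀, fun m => ?_⟩
      have : repSet (↑(∅ : Finset ℤ)) m = ∅ := by
        ext p; simp [repSet]
      rw [repFn_eq, this, Set.encard_empty]
      exact zero_le
    | succ k ih =>
      rw [hstS]
      exact (hnext (st k) k ih).2.2.1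
  have hSt : ∀ k, StepP f φ (tEnum k) (st k) (st (k + 1)) := by
    intro k
    rw [hstS]
    exact hnext (st k) k (hInv k)
  -- monotonicity
  have hmono : ∀ j k, j ≤ k → (st j).1 ⊆ (st k).1 := by
    intro j k hjk
    induction k with
    | zero => simp_all
    | succ k ih =>
      rcases Nat.lt_or_ge j (k+1) with h | h
      · exact (ih (by omega)).trans (hSt k).1
      · have : j = k + 1 := by omega
        subst this; exact Finset.Subset.refl _
  set A : Set ℤ := ⋃ k, ((st k).1 : Set ℤ) with hA
  have hsubA : ∀ k, ((st k).1 : Set ℤ) ⊆ A := fun k => Set.subset_iUnion (fun k => ((st k).1 : Set ℤ)) k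
  -- reaching the value
  have hgrow : ∀ (n : ℤ) (c : ℕ), ∃ k, min (f n) c ≤ repFn (↑(st k).1) n := by
    intro n c
    induction c with
    | zero => exact ⟨0, le_trans (min_le_right _ _) (by simp)⟩
    | succ c ih =>
      obtain ⟨k, hk⟩ := ih
      by_cases hdone : min (f n) (c+1 : ℕ) ≤ repFn (↑(st k).1) n
      · exact ⟨k, hdone⟩
      · obtain ⟨k', hkk', htk'⟩ := tEnum_hits n k
        have hm1 : repFn (↑(st k).1) n ≤ repFn (↑(st k').1) n :=
          repFn_mono (Finset.coe_subset.mpr (hmono k k' hkk')) n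
        by_cases hdone' : min (f n) (c+1 : ℕ) ≤ repFn (↑(st k').1) n
        · exact ⟨k', hdone'⟩
        · have hlt : repFn (↑(st k').1) n < f n := by
            have h1 : repFn (↑(st k').1) n < min (f n) (c+1 : ℕ) := lt_of_not_ge hdone'
            exact lt_of_lt_of_le h1 (min_le_left _ _)
          have hinc := (hSt k')
          rw [htk'] at hinc
          have h2 := hinc.2.2.2.1 hlt
          refine ⟨k' + 1, ?_⟩
          have h3 : min (f n) (c : ℕ∞) + 1 ≤ repFn (↑(st k').1) n + 1 := by
            exact add_le_add_left (le_trans hk hm1) 1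
          have h4 : min (f n) ((c:ℕ∞) + 1) ≤ min (f n) (c : ℕ∞) + 1 := by
            rcases le_total (f n) (c : ℕ∞) with h | h
            · rw [min_eq_left (le_trans h le_self_add), min_eq_left h]
              exact le_self_add
            · rw [min_eq_right h]
              exact min_le_right _ _
          have hcast : ((c + 1 : ℕ) : ℕ∞) = (c : ℕ∞) + 1 := by push_cast; ring
          rw [hcast]
          exact le_trans h4 (le_trans h3 h2)
  -- stabilized description of repSet of A
  have hAdesc : ∀ (n : ℤ) (K : ℕ),
      (∀ k, K ≤ k → repSet (↑(st k).1) n = repSet (↑(st K).1) n) →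
      repSet A n = repSet (↑(st K).1) n := by
    intro n K hstab
    apply Set.Subset.antisymm
    · rintro ⟨u, v⟩ ⟨hu, hv, hle, hsum⟩
      obtain ⟨_, ⟨i, rfl⟩, hui⟩ := hu
      obtain ⟨_, ⟨j, rfl⟩, hvj⟩ := hv
      have hk : (u, v) ∈ repSet (↑(st (max (max i j) K)).1) n := by
        refine ⟨?_, ?_, hle, hsum⟩
        · exact hmono i _ (le_trans (le_max_left i j) (le_max_left _ K)) hui
        · exact hmono j _ (le_trans (le_max_right i j) (le_max_left _ K)) hvj
      rw [hstab _ (le_max_right _ _)] at hk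
      exact hk
    · exact repSet_mono (hsubA K) n
  -- the main property
  have hmain : ∀ n : ℤ, repFn A n = f n := by
    intro n
    rcases eq_top_or_lt_top (f n) with htop | hlt
    · have hall : ∀ c : ℕ, (c : ℕ∞) ≤ repFn A n := by
        intro c
        obtain ⟨k, hk⟩ := hgrow n c
        rw [htop, min_eq_right le_top] at hk
        exact le_trans hk (repFn_mono (hsubA k) n)
      rw [htop]
      by_contra hne
      obtain ⟨c, hc⟩ := WithTop.ne_top_iff_exists.mp hne
      have h1 := hall (c + 1)
      rw [← hc] at h1
      have h2 : c + 1 ≤ c := (Nat.cast_le (α := ℕ∞)).mp h1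
      omega
    · obtain ⟨c, hc⟩ := WithTop.ne_top_iff_exists.mp (ne_of_lt hlt)
      obtain ⟨K, hK⟩ := hgrow n c
      have hfn : f n = (c : ℕ∞) := hc.symm
      rw [hfn, min_self] at hK
      rw [← hfn] at hK
      have hKle := (hInv K).2.2 n
      have hKeq : repFn (↑(st K).1) n = f n := le_antisymm hKle hK
      have hstab : ∀ k, K ≤ k → repSet (↑(st k).1) n = repSet (↑(st K).1) n := by
        intro k hk
        have hsub : repSet (↑(st K).1) n ⊆ repSet (↑(st k).1) n :=
          repSet_mono (Finset.coe_subset.mpr (hmono K k hk)) n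
        have hle2 : (repSet (↑(st k).1) n).encard ≤ (repSet (↑(st K).1) n).encard := by
          rw [← repFn_eq, ← repFn_eq, hKeq]
          exact (hInv k).2.2 n
        exact ((repSet_finite _ n).eq_of_subset_of_encard_le hsub hle2).symm
      rw [repFn_eq, hAdesc n K hstab, ← repFn_eq, hKeq]
  refine ⟨A, ?_, hmain, ?_⟩
  · have hset : {n : ℤ | ¬ 1 ≤ repFn A n} = {n : ℤ | f n = 0} := by
      ext n
      simp only [Set.mem_setOf_eq, hmain n, not_le]
      exact ⟨fun h => ENat.lt_one_iff_eq_zero.mp h, fun h => by rw [h]; exact zero_lt_one⟩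
    rw [hset]; exact hf
  · -- density
    have hBk : ∀ k, k ≤ (st k).2 := by
      intro k
      induction k with
      | zero => exact Nat.zero_le _
      | succ k ih => have := (hSt k).2.1; omega
    have hgood : ∀ k₀ : ℕ, ∃ x : ℕ, k₀ < x ∧ 0 < x ∧
        Real.sqrt x / φ x < (countFn A (-(x:ℝ)) (x:ℝ) : ℝ) := by
      intro k₀
      obtain ⟨x, hx1, G, hGsub, hGb, hGc⟩ := (hSt k₀).2.2.2.2
      refine ⟨x, by have := hBk k₀; omega, by have := hBk k₀; omega, ?_⟩
      have hGA : (↑G : Set ℤ) ⊆ {a : ℤ | a ∈ A ∧ -(x:ℝ) ≤ (a:ℝ) ∧ (a:ℝ) ≤ x} := by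
        intro g hg
        have hgA : g ∈ A := hsubA (k₀+1) (hGsub hg)
        obtain ⟨hg0, hgx⟩ := hGb g hg
        refine ⟨hgA, ?_, ?_⟩
        · have h1 : (0:ℝ) ≤ (g:ℝ) := by exact_mod_cast hg0
          have hx0 : (0:ℝ) ≤ (x:ℝ) := by positivity
          linarith
        · exact_mod_cast hgx
      have hfinx : {a : ℤ | a ∈ A ∧ -(x:ℝ) ≤ (a:ℝ) ∧ (a:ℝ) ≤ x}.Finite := by
        apply Set.Finite.subset (Set.finite_Icc (-(x:ℤ)) (x:ℤ))
        intro a ha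
        simp only [Set.mem_Icc]
        constructor
        · have h1 : ((-(x:ℤ) : ℤ) : ℝ) ≤ (a:ℝ) := by push_cast; exact ha.2.1
          exact_mod_cast h1
        · exact_mod_cast ha.2.2
      have hcount : G.card ≤ countFn A (-(x:ℝ)) (x:ℝ) := by
        rw [countFn]
        calc G.card = (↑G : Set ℤ).ncard := (Set.ncard_coe_finset G).symm
        _ ≤ _ := Set.ncard_le_ncard hGA hfinx
      calc Real.sqrt x / φ x < (G.card : ℝ) := hGc
      _ ≤ _ := by exact_mod_cast hcount
    apply Set.infinite_of_not_bddAbove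
    rintro ⟨b, hb⟩
    obtain ⟨x, hx1, hx2, hx3⟩ := hgood b
    exact absurd (hb ⟨hx2, hx3⟩) (by omega)
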